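/- Let a, b, c ∈ ℂ with c not a nonpositive integer. Then there is an open neighborhood U of 0 in ℂ such that the function g(x) = ₂F₁(a, b; c; 4x(1-x)) satisfies Heun's differential equation with parameters (t, q; a', b'; c'; d') = (1/2, 2ab; 2a, 2b; c; c) at every x ∈ U with x ∉ {0, 1, 1/2}. -/

import Mathlib

open Complex

open FormalMultilinearSeries

lemma coeff_rec (a b c : ℂ) (hc : ∀ n : ℕ, c ≠ -(n : ℂ)) (n : ℕ) :
    ((n : ℂ) + 1) * ((n : ℂ) + c) * ordinaryHypergeometricCoefficient a b c (n + 1) =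
      ((n : ℂ) + a) * ((n : ℂ) + b) * ordinaryHypergeometricCoefficient a b c n := by
  have h1 : (c + (n : ℂ)) ≠ 0 := fun h => hc n (by linear_combination h)
  have h2 : ((n : ℂ) + 1) ≠ 0 := Nat.cast_add_one_ne_zero n
  have h3 : (ascPochhammer ℂ n).eval c ≠ 0 := by
    simp only [ne_eq, ascPochhammer_eval_eq_zero_iff]
    push_neg
    exact fun k _ h => absurd (by linear_combination h : c = -(k:ℂ)) (hc k)
  have h4 : ((Nat.factorial n : ℂ)) ≠ 0 := Nat.cast_ne_zero.2 (Nat.factorial_ne_zero n)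
  unfold ordinaryHypergeometricCoefficient
  rw [ascPochhammer_succ_eval, ascPochhammer_succ_eval, ascPochhammer_succ_eval,
    Nat.factorial_succ]
  push_cast
  field_simp
  ring

lemma radius_ge (a b c : ℂ) (hc : ∀ n : ℕ, c ≠ -(n : ℂ)) :
    1 ≤ (ordinaryHypergeometricSeries ℂ a b c).radius := by
  by_cases h : ∀ kn : ℕ, (kn : ℂ) ≠ -a ∧ (kn : ℂ) ≠ -b ∧ (kn : ℂ) ≠ -c
  · rw [ordinaryHypergeometricSeries_radius_eq_one ℂ a b c h]
  · push_neg at h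
    obtain ⟨k, hk⟩ := h
    by_cases ha : (k : ℂ) = -a
    · have : a = -(k : ℂ) := by linear_combination ha
      rw [this, ordinaryHypergeometric_radius_top_of_neg_nat₁]
      exact le_top
    by_cases hb : (k : ℂ) = -b
    · have : b = -(k : ℂ) := by linear_combination hb
      rw [this, ordinaryHypergeometric_radius_top_of_neg_nat₂]
      exact le_top
    · exact absurd (by linear_combination (hk ha hb) : c = -(k:ℂ)) (hc k)

lemma mem_ball_one' {z : ℂ} (hz : ‖z‖ < 1) : z ∈ Metric.eball (0:ℂ) 1 := by
  rw [Metric.mem_eball, edist_zero_right]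
  rw [← ofReal_norm, ENNReal.ofReal_lt_one]; exact hz

lemma hyp_series (a b c : ℂ) (hc : ∀ n : ℕ, c ≠ -(n : ℂ)) :
    HasFPowerSeriesOnBall (ordinaryHypergeometric a b c)
      (ordinaryHypergeometricSeries ℂ a b c) 0 1 :=
  ((ordinaryHypergeometricSeries ℂ a b c).hasFPowerSeriesOnBall
    (lt_of_lt_of_le zero_lt_one (radius_ge a b c hc))).mono zero_lt_one (radius_ge a b c hc)

lemma S0sum (a b c : ℂ) (hc : ∀ n : ℕ, c ≠ -(n : ℂ)) {z : ℂ} (hz : ‖z‖ < 1) :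
    HasSum (fun (n:ℕ) => ordinaryHypergeometricCoefficient a b c n * z ^ n)
      (ordinaryHypergeometric a b c z) := by
  have h := (hyp_series a b c hc).hasSum (mem_ball_one' hz)
  simp only [zero_add] at h
  convert h using 2 with n
  · rfl
  rw [ordinaryHypergeometricSeries_apply_eq, smul_eq_mul]

lemma S1sum (a b c : ℂ) (hc : ∀ n : ℕ, c ≠ -(n : ℂ)) {z : ℂ} (hz : ‖z‖ < 1) :
    HasSum (fun (n : ℕ) => ((n:ℂ)+1) * ordinaryHypergeometricCoefficient a b c (n+1) * z ^ (n+1))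
      (z * deriv (ordinaryHypergeometric a b c) z) := by
  have hp := hyp_series a b c hc
  have h := (hp.fderiv.hasSum (mem_ball_one' hz)).mapL (ContinuousLinearMap.apply ℂ ℂ z)
  simp only [zero_add, ContinuousLinearMap.apply_apply] at h
  have e1 := (fderiv ℂ (ordinaryHypergeometric a b c) z).map_smul z (1:ℂ)
  simp only [smul_eq_mul, mul_one, fderiv_apply_one_eq_deriv] at e1
  rw [e1] at h
  convert h using 2 with n
  · rfl
  rw [derivSeries_apply_diag, ordinaryHypergeometricSeries_apply_eq, smul_eq_mul, nsmul_eq_mul]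
  push_cast
  ring

lemma S2sum (a b c : ℂ) (hc : ∀ n : ℕ, c ≠ -(n : ℂ)) {z : ℂ} (hz : ‖z‖ < 1) :
    HasSum (fun (n : ℕ) => ((n:ℂ)+1) * ((n:ℂ)+2) *
        ordinaryHypergeometricCoefficient a b c (n+2) * z ^ (n+2))
      (z^2 * deriv (deriv (ordinaryHypergeometric a b c)) z) := by
  have hp := hyp_series a b c hc
  set f : ℂ → ℂ := ordinaryHypergeometric a b c with hf
  have hF : DifferentiableAt ℂ (fderiv ℂ f) z :=
    (hp.fderiv.analyticAt_of_mem (mem_ball_one' hz)).differentiableAt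
  have hdd : deriv (deriv f) z = fderiv ℂ (fderiv ℂ f) z 1 1 := by
    have e0 : deriv f = (ContinuousLinearMap.apply ℂ ℂ (1:ℂ)) ∘ (fderiv ℂ f) := rfl
    rw [← fderiv_apply_one_eq_deriv, e0,
      fderiv_comp z (ContinuousLinearMap.apply ℂ ℂ (1:ℂ)).differentiableAt hF,
      (ContinuousLinearMap.apply ℂ ℂ (1:ℂ)).fderiv]
    rfl
  have h := ((hp.fderiv.fderiv.hasSum (mem_ball_one' hz)).mapL
      (ContinuousLinearMap.apply ℂ (ℂ →L[ℂ] ℂ) z)).mapL (ContinuousLinearMap.apply ℂ ℂ z)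
  simp only [zero_add, ContinuousLinearMap.apply_apply] at h
  have e1 : fderiv ℂ (fderiv ℂ f) z z z = z^2 * deriv (deriv f) z := by
    have a1 := (fderiv ℂ (fderiv ℂ f) z).map_smul z (1:ℂ)
    simp only [smul_eq_mul, mul_one] at a1
    have a2 := (fderiv ℂ (fderiv ℂ f) z 1).map_smul z (1:ℂ)
    simp only [smul_eq_mul, mul_one] at a2
    rw [a1, ContinuousLinearMap.smul_apply, a2, hdd, smul_eq_mul]
    ring
  rw [e1] at h
  convert h using 2 with n
  · rfl
  rw [derivSeries_apply_diag, ContinuousLinearMap.smul_apply, derivSeries_apply_diag,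
    ordinaryHypergeometricSeries_apply_eq]
  simp only [smul_eq_mul, nsmul_eq_mul, smul_smul]
  push_cast
  ring

lemma hyp_ode (a b c : ℂ) (hc : ∀ n : ℕ, c ≠ -(n : ℂ)) {z : ℂ} (hz : ‖z‖ < 1) (hz0 : z ≠ 0) :
    z * (1 - z) * deriv (deriv (ordinaryHypergeometric a b c)) z
      + (c - (a + b + 1) * z) * deriv (ordinaryHypergeometric a b c) z
      - a * b * ordinaryHypergeometric a b c z = 0 := by
  set β := ordinaryHypergeometricCoefficient a b c with hβ
  set f : ℂ → ℂ := ordinaryHypergeometric a b c with hf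
  set F0 := f z; set F1 := deriv f z; set F2 := deriv (deriv f) z
  have S0 : HasSum (fun (n:ℕ) => β n * z ^ n) F0 := S0sum a b c hc hz
  have S1 : HasSum (fun (n:ℕ) => ((n:ℂ)+1) * β (n+1) * z ^ (n+1)) (z * F1) := S1sum a b c hc hz
  have S2 : HasSum (fun (n:ℕ) => ((n:ℂ)+1)*((n:ℂ)+2) * β (n+2) * z ^ (n+2)) (z^2 * F2) :=
    S2sum a b c hc hz
  have T1 : HasSum (fun (n:ℕ) => ((n:ℂ)+1) * β (n+1) * z ^ n) F1 := by
    have h := S1.mul_left z⁻¹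
    rw [inv_mul_cancel_left₀ hz0] at h
    convert h using 2 with n
    · rfl
    rw [pow_succ]
    field_simp
  have U1 : HasSum (fun (n:ℕ) => (n:ℂ) * β n * z ^ n) (z * F1) := by
    have h : HasSum (fun (n:ℕ) => ((n+1 : ℕ):ℂ) * β (n+1) * z ^ (n+1)) (z * F1) := by
      convert S1 using 2 with n; push_cast; ring
    have := (hasSum_nat_add_iff (f := fun (n:ℕ) => (n:ℂ) * β n * z ^ n) 1).mp h
    simpa using this
  have U2 : HasSum (fun (n:ℕ) => (n:ℂ) * ((n:ℂ)-1) * β n * z ^ n) (z^2 * F2) := by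
    have h : HasSum (fun (n:ℕ) => ((n+2:ℕ):ℂ) * (((n+2:ℕ):ℂ)-1) * β (n+2) * z ^ (n+2))
        (z^2 * F2) := by
      convert S2 using 2 with n; push_cast; ring
    have := (hasSum_nat_add_iff (f := fun (n:ℕ) => (n:ℂ) * ((n:ℂ)-1) * β n * z ^ n) 2).mp h
    simpa [Finset.sum_range_succ] using this
  have V2 : HasSum (fun (n:ℕ) => ((n:ℂ)+1) * (n:ℂ) * β (n+1) * z ^ n) (z * F2) := by
    have h0 : HasSum (fun (n:ℕ) => ((n:ℂ)+1)*((n:ℂ)+2) * β (n+2) * z ^ (n+1)) (z * F2) := by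
      have h := S2.mul_left z⁻¹
      rw [show z⁻¹ * (z^2 * F2) = z * F2 by field_simp] at h
      convert h using 2 with n
      · rfl
      rw [pow_succ, pow_succ]
      field_simp
      ring
    have h : HasSum (fun (n:ℕ) => (((n+1:ℕ):ℂ)+1) * ((n+1:ℕ):ℂ) * β ((n+1)+1) * z ^ (n+1))
        (z * F2) := by
      convert h0 using 2 with n; push_cast; ring
    have := (hasSum_nat_add_iff
      (f := fun (n:ℕ) => ((n:ℂ)+1) * (n:ℂ) * β (n+1) * z ^ n) 1).mp h
    simpa using this
  have W := ((((V2.sub U2).add (T1.mul_left c)).sub (U1.mul_left (a+b+1))).sub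
    (S0.mul_left (a*b)))
  have Wz : HasSum (fun (_:ℕ) => (0:ℂ))
      (z * F2 - z^2 * F2 + c * F1 - (a+b+1) * (z * F1) - a*b*F0) := by
    convert W using 2 with n
    · rfl
    linear_combination -z^n * coeff_rec a b c hc n
  have := hasSum_zero.unique Wz
  linear_combination -this

lemma heun_alg (a b c x F0 F1 F2 : ℂ) (hx0 : x ≠ 0) (hx1 : x ≠ 1) (hxh : x ≠ 1/2)
    (E : (4*x*(1-x)) * (1 - 4*x*(1-x)) * F2 + (c - (a+b+1) * (4*x*(1-x))) * F1 - a*b*F0 = 0) :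
    (F2 * (4-8*x)^2 + F1 * (-8)) +
      (c / x + c / (x - 1) + (2*a + 2*b - c - c + 1) / (x - 1/2)) * (F1 * (4-8*x)) +
      ((2*a * (2*b) * x - 2*a*b) / (x * (x - 1) * (x - 1/2))) * F0 = 0 := by
  have h1 : x - 1 ≠ 0 := sub_ne_zero.2 hx1
  have h2 : (2*x - 1 : ℂ) ≠ 0 := by
    intro h; exact hxh (by linear_combination h/2)
  rw [show x - (1/2:ℂ) = (2*x-1)/2 from by ring]
  have h3 : (x*2 - 1 : ℂ) ≠ 0 := by rw [mul_comm]; exact h2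
  field_simp
  linear_combination (-4*(2*x-1)) * E

/-- `g` satisfies Heun's differential equation with parameters `(t, q; a, b; c; d)`
at the point `x`: `g` is twice complex differentiable at `x` and
`g''(x) + (c/x + d/(x-1) + (a+b-c-d+1)/(x-t)) g'(x) + ((a b x - q)/(x(x-1)(x-t))) g(x) = 0`. -/
def SatisfiesHeunAt (t q a b c d : ℂ) (g : ℂ → ℂ) (x : ℂ) : Prop :=
  DifferentiableAt ℂ g x ∧ DifferentiableAt ℂ (deriv g) x ∧
    deriv (deriv g) x +
      (c / x + d / (x - 1) + (a + b - c - d + 1) / (x - t)) * deriv g x +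
      ((a * b * x - q) / (x * (x - 1) * (x - t))) * g x = 0

theorem stmt6 (a b c : ℂ) (hc : ∀ n : ℕ, c ≠ -(n : ℂ)) :
    ∃ U : Set ℂ, IsOpen U ∧ (0 : ℂ) ∈ U ∧ ∀ x ∈ U, x ≠ (0 : ℂ) → x ≠ (1 : ℂ) → x ≠ (1/2 : ℂ) →
      SatisfiesHeunAt (1/2) (2*a*b) (2*a) (2*b) (c) (c)
        (fun x : ℂ => ordinaryHypergeometric a b c (4*x*(1-x))) x := by
  set f : ℂ → ℂ := ordinaryHypergeometric a b c with hfdef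
  set g : ℂ → ℂ := fun x : ℂ => f (4*x*(1-x)) with hgdef
  have hp := hyp_series a b c hc
  refine ⟨{x : ℂ | ‖4*x*(1-x)‖ < 1}, ?_, by simp, ?_⟩
  · have : Continuous fun x : ℂ => ‖4*x*(1-x)‖ := by continuity
    exact isOpen_lt this continuous_const
  intro x hxU hx0 hx1 hxh
  set z : ℂ := 4*x*(1-x) with hzdef
  have hz : ‖z‖ < 1 := hxU
  have hz0 : z ≠ 0 := by
    rw [hzdef]
    intro h
    rcases mul_eq_zero.1 h with h' | h'
    · rcases mul_eq_zero.1 h' with h'' | h''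
      · norm_num at h''
      · exact hx0 h''
    · exact hx1 (by linear_combination -h')
  -- derivative of φ
  have hφ : ∀ y : ℂ, HasDerivAt (fun w : ℂ => 4*w*(1-w)) (4 - 8*y) y := by
    intro y
    have h := (((hasDerivAt_id y).const_mul (4:ℂ)).mul ((hasDerivAt_const y (1:ℂ)).sub
      (hasDerivAt_id y)))
    convert h using 1
    all_goals try rfl
    simp only [id_eq, Pi.sub_apply]
    ring
  -- first derivative of g on U
  have hgd : ∀ y : ℂ, ‖4*y*(1-y)‖ < 1 → HasDerivAt g (deriv f (4*y*(1-y)) * (4 - 8*y)) y := by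
    intro y hy
    have hdf : DifferentiableAt ℂ f (4*y*(1-y)) :=
      (hp.analyticAt_of_mem (mem_ball_one' hy)).differentiableAt
    exact (hdf.hasDerivAt.comp y (hφ y))
  -- differentiability of deriv f at points of the ball
  have hd2 : ∀ w : ℂ, ‖w‖ < 1 → DifferentiableAt ℂ (deriv f) w := by
    intro w hw
    have hF : DifferentiableAt ℂ (fderiv ℂ f) w :=
      (hp.fderiv.analyticAt_of_mem (mem_ball_one' hw)).differentiableAt
    have e0 : deriv f = (ContinuousLinearMap.apply ℂ ℂ (1:ℂ)) ∘ (fderiv ℂ f) := rfl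
    rw [e0]
    exact ((ContinuousLinearMap.apply ℂ ℂ (1:ℂ)).differentiableAt).comp w hF
  -- the explicit first-derivative function
  set h1 : ℂ → ℂ := fun y => deriv f (4*y*(1-y)) * (4 - 8*y) with hh1
  have hev : deriv g =ᶠ[nhds x] h1 := by
    have hU : IsOpen {y : ℂ | ‖4*y*(1-y)‖ < 1} := by
      have : Continuous fun y : ℂ => ‖4*y*(1-y)‖ := by continuity
      exact isOpen_lt this continuous_const
    filter_upwards [hU.mem_nhds hxU] with y hy
    exact (hgd y hy).deriv
  have hh1d : HasDerivAt h1 (deriv (deriv f) z * (4-8*x) * (4-8*x) + deriv f z * (-8)) x := by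
    have hu : HasDerivAt (fun y : ℂ => deriv f (4*y*(1-y))) (deriv (deriv f) z * (4-8*x)) x :=
      (hd2 z hz).hasDerivAt.comp_of_eq x (hφ x) rfl
    have hv : HasDerivAt (fun y : ℂ => 4 - 8*y) (-8 : ℂ) x := by
      simpa using ((hasDerivAt_id x).const_mul (8:ℂ)).const_sub (4:ℂ)
    exact hu.mul hv
  have e_g1 : deriv g x = deriv f z * (4 - 8*x) := (hgd x hxU).deriv
  have e_g2 : deriv (deriv g) x
      = deriv (deriv f) z * (4-8*x) * (4-8*x) + deriv f z * (-8) := by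
    rw [hev.deriv_eq]
    exact hh1d.deriv
  refine ⟨(hgd x hxU).differentiableAt, ?_, ?_⟩
  · rw [Filter.EventuallyEq.differentiableAt_iff hev]
    exact hh1d.differentiableAt
  · have E := hyp_ode a b c hc hz hz0
    have halg := heun_alg a b c x (f z) (deriv f z) (deriv (deriv f) z) hx0 hx1 hxh
      (by linear_combination E)
    rw [e_g1, e_g2]
    have hgx : g x = f z := rfl
    rw [hgx]
    linear_combination halg
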